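/- Let q ≥ 0 and let t ∈ ℕ with t ≥ 3. Then Σ_{k=1}^{t−1} k^{−q}/(t−k) ≤ 4 t^{−min(q,1)} log t. -/

import Mathlib

open Finset

/-- Lemma 8: a uniform estimate on `∑_{k=1}^{t-1} k^{−q}/(t−k)`. -/
theorem sum_inv_mul_rpow_bound' (q : ℝ) (hq : 0 ≤ q) (t : ℕ) (ht : 3 ≤ t) :
    ∑ k ∈ Icc 1 (t - 1), (k : ℝ) ^ (-q) / ((t : ℝ) - (k : ℝ))
      ≤ 4 * (t : ℝ) ^ (-(min q 1)) * Real.log t := by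
  set q' : ℝ := min q 1 with hq'
  have hq'0 : 0 ≤ q' := le_min hq zero_le_one
  have hq'1 : q' ≤ 1 := min_le_right _ _
  have ht0 : (0:ℝ) < t := by positivity
  -- Step A: pointwise bound
  have hstep : ∀ k ∈ Icc 1 (t - 1),
      (k : ℝ) ^ (-q) / ((t : ℝ) - (k : ℝ))
        ≤ (t:ℝ) ^ (1 - q') * ((k:ℝ)⁻¹ * ((t:ℝ) - (k:ℝ))⁻¹) := by
    intro k hk
    rw [mem_Icc] at hk
    have hk1 : (1:ℝ) ≤ k := by exact_mod_cast hk.1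
    have hk0 : (0:ℝ) < k := by linarith
    have hkt : (k:ℝ) < t := by
      have : k < t := lt_of_le_of_lt hk.2 (Nat.sub_lt (by omega) one_pos)
      exact_mod_cast this
    have htk : (0:ℝ) < (t:ℝ) - k := by linarith
    have h1 : (k:ℝ) ^ (-q) ≤ (k:ℝ) ^ (-q') := by
      apply Real.rpow_le_rpow_of_exponent_le hk1
      simp [hq', neg_le_neg_iff, min_le_left]
    have h2 : (k:ℝ) ^ (-q') ≤ (t:ℝ) ^ (1 - q') * (k:ℝ)⁻¹ := by
      have heq : (k:ℝ) ^ (-q') = (k:ℝ) ^ (1 - q') * (k:ℝ)⁻¹ := by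
        rw [← Real.rpow_neg_one (k:ℝ), ← Real.rpow_add hk0]
        congr 1; ring
      rw [heq]
      exact mul_le_mul_of_nonneg_right
        (Real.rpow_le_rpow hk0.le hkt.le (by linarith)) (inv_nonneg.mpr hk0.le)
    calc (k : ℝ) ^ (-q) / ((t : ℝ) - (k : ℝ))
        ≤ ((t:ℝ) ^ (1 - q') * (k:ℝ)⁻¹) / ((t : ℝ) - (k : ℝ)) := by
          gcongr
          exact h1.trans h2
      _ = (t:ℝ) ^ (1 - q') * ((k:ℝ)⁻¹ * ((t:ℝ) - (k:ℝ))⁻¹) := by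
          field_simp
  refine (Finset.sum_le_sum hstep).trans ?_
  rw [← Finset.mul_sum]
  -- Step B: partial fractions
  have hB : ∑ k ∈ Icc 1 (t-1), ((k:ℝ)⁻¹ * ((t:ℝ) - (k:ℝ))⁻¹)
      = (t:ℝ)⁻¹ * ∑ k ∈ Icc 1 (t-1), ((k:ℝ)⁻¹ + ((t:ℝ) - (k:ℝ))⁻¹) := by
    rw [Finset.mul_sum]
    apply Finset.sum_congr rfl
    intro k hk
    rw [mem_Icc] at hk
    have hk0 : (0:ℝ) < k := by exact_mod_cast hk.1
    have hkt : (k:ℝ) < t := by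
      exact_mod_cast lt_of_le_of_lt hk.2 (Nat.sub_lt (by omega) one_pos)
    have htk : (0:ℝ) < (t:ℝ) - k := by linarith
    field_simp
    ring
  rw [hB]
  -- symmetry
  have hsym : ∑ k ∈ Icc 1 (t-1), ((t:ℝ) - (k:ℝ))⁻¹ = ∑ k ∈ Icc 1 (t-1), (k:ℝ)⁻¹ := by
    apply Finset.sum_nbij' (fun k => t - k) (fun k => t - k)
    · intro k hk; rw [mem_Icc] at hk ⊢; omega
    · intro k hk; rw [mem_Icc] at hk ⊢; omega
    · intro k hk; rw [mem_Icc] at hk; omega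
    · intro k hk; rw [mem_Icc] at hk; omega
    · intro k hk
      rw [mem_Icc] at hk
      have hcast : ((t - k : ℕ) : ℝ) = (t:ℝ) - k := by
        have : k ≤ t := by omega
        push_cast [this]; ring
      rw [hcast]
  -- harmonic bound
  have hlog1 : (1:ℝ) ≤ Real.log t := by
    have h3 : Real.exp 1 < 3 := Real.exp_one_lt_d9.trans_le (by norm_num)
    have : (1:ℝ) < Real.log 3 := (Real.lt_log_iff_exp_lt (by norm_num)).mpr h3
    have h3t : Real.log 3 ≤ Real.log t :=
      Real.log_le_log (by norm_num) (by exact_mod_cast ht)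
    linarith
  have hH : ∑ k ∈ Icc 1 (t-1), (k:ℝ)⁻¹ ≤ 2 * Real.log t := by
    have h := harmonic_le_one_add_log (t-1)
    rw [harmonic_eq_sum_Icc] at h
    push_cast at h
    have hlt : Real.log (t-1:ℕ) ≤ Real.log t :=
      Real.log_le_log (by exact_mod_cast (by omega : (1:ℕ) ≤ t-1)) (by exact_mod_cast (by omega : t - 1 ≤ t))
    calc ∑ k ∈ Icc 1 (t-1), (k:ℝ)⁻¹ ≤ 1 + Real.log (t-1:ℕ) := h
      _ ≤ Real.log t + Real.log t := by linarith
      _ = 2 * Real.log t := by ring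
  have hsum2 : ∑ k ∈ Icc 1 (t-1), ((k:ℝ)⁻¹ + ((t:ℝ) - (k:ℝ))⁻¹)
      ≤ 4 * Real.log t := by
    rw [Finset.sum_add_distrib, hsym]
    linarith
  have hrpow : (t:ℝ) ^ (1 - q') * (t:ℝ)⁻¹ = (t:ℝ) ^ (-q') := by
    rw [← Real.rpow_neg_one (t:ℝ), ← Real.rpow_add ht0]
    congr 1; ring
  calc (t:ℝ) ^ (1 - q') * ((t:ℝ)⁻¹ * ∑ k ∈ Icc 1 (t-1), ((k:ℝ)⁻¹ + ((t:ℝ) - (k:ℝ))⁻¹))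
      = (t:ℝ) ^ (-q') * ∑ k ∈ Icc 1 (t-1), ((k:ℝ)⁻¹ + ((t:ℝ) - (k:ℝ))⁻¹) := by
        rw [← mul_assoc, hrpow]
    _ ≤ (t:ℝ) ^ (-q') * (4 * Real.log t) := by
        apply mul_le_mul_of_nonneg_left hsum2 (Real.rpow_nonneg ht0.le _)
    _ = 4 * (t:ℝ) ^ (-q') * Real.log t := by ring
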